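/- Precision lower bound for LocGD: In the LocGD process with Q = I - ((1-α)/(1+α)) W, b = (2α/(1+α)) D^{-1/2} e_s, x^{(0)} = 0, r^{(0)} = b, updates x^{(t+1)} = x^{(t)} + r^{(t)}_{S_t} and r^{(t+1)} = r^{(t)} - Q r^{(t)}_{S_t}, assume ε > 0, ‖D^{1/2} r^{(t)}‖_1 > 0 for all t < T, and that every u ∈ S_t is active: √(d_u) · r^{(t)}_u ≥ (2αε/(1+α)) d_u. Setting γ_t = ‖D^{1/2} r^{(t)}_{S_t}‖_1 / ‖D^{1/2} r^{(t)}‖_1, one has ε · vol(S_t) ≤ γ_t for every t < T, and consequently vol̄(S_T)/γ̄_T ≤ 1/ε, where vol̄(S_T) = (1/T) Σ_{t<T} vol(S_t) and γ̄_T = (1/T) Σ_{t<T} γ_t. -/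

import Mathlib

/-- Precision lower bound for LocGD. -/
theorem locGD_precision_lower_bound
    {V : Type*} [Fintype V] [DecidableEq V] [Nonempty V]
    (A : Matrix V V ℝ) (hsym : A.IsSymm)
    (h01 : ∀ u v, A u v = 0 ∨ A u v = 1)
    (hdiag : ∀ u, A u u = 0)
    (d : V → ℝ) (hd : ∀ u, d u = ∑ v, A u v)
    (hdpos : ∀ u, 0 < d u)
    (α : ℝ) (hα0 : 0 < α) (hα1 : α < 1)
    (W : Matrix V V ℝ)
    (hW : ∀ v w, W v w = A v w / (Real.sqrt (d v) * Real.sqrt (d w)))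
    (Q : Matrix V V ℝ) (hQ : Q = 1 - ((1 - α) / (1 + α)) • W)
    (s : V) (ε : ℝ) (hε : 0 < ε)
    (b : V → ℝ)
    (hb : b = fun v => (2 * α / (1 + α)) * ((Pi.single s 1 : V → ℝ) v / Real.sqrt (d v)))
    (T : ℕ) (hT : 1 ≤ T) (S : ℕ → Finset V)
    (x r : ℕ → V → ℝ)
    (hx0 : x 0 = 0) (hr0 : r 0 = b)
    (hxupd : ∀ t, x (t + 1) = x t + fun v => if v ∈ S t then r t v else 0)
    (hrupd : ∀ t, r (t + 1) = r t - Q.mulVec fun v => if v ∈ S t then r t v else 0)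
    (hpos : ∀ t < T, 0 < ∑ v, |Real.sqrt (d v) * r t v|)
    (hactive : ∀ t < T, ∀ u ∈ S t, (2 * α * ε / (1 + α)) * d u ≤ Real.sqrt (d u) * r t u)
    (γ : ℕ → ℝ)
    (hγ : ∀ t < T, γ t =
      (∑ v, |Real.sqrt (d v) * (if v ∈ S t then r t v else 0)|) /
        (∑ v, |Real.sqrt (d v) * r t v|))
    (volbar γbar : ℝ)
    (hvolbar : volbar = (1 / (T : ℝ)) * ∑ t ∈ Finset.range T, ∑ u ∈ S t, d u)
    (hγbar : γbar = (1 / (T : ℝ)) * ∑ t ∈ Finset.range T, γ t) :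
    (∀ t < T, ε * (∑ u ∈ S t, d u) ≤ γ t) ∧ volbar / γbar ≤ 1 / ε := by

  have hα1' : (0:ℝ) < 1 + α := by linarith
  have hβ0 : (0:ℝ) ≤ (1 - α) / (1 + α) := div_nonneg (by linarith) (by linarith)
  have hβ1 : (1 - α) / (1 + α) ≤ 1 := by
    rw [div_le_one hα1']; linarith
  have hsqpos : ∀ v, 0 < Real.sqrt (d v) := fun v => Real.sqrt_pos.mpr (hdpos v)
  have hsqne : ∀ v, Real.sqrt (d v) ≠ 0 := fun v => (hsqpos v).ne'
  have h1α : (1:ℝ) + α ≠ 0 := hα1'.ne'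
  -- key monotonicity bound
  have key : ∀ t, (∑ v, |Real.sqrt (d v) * r t v|) ≤ 2 * α / (1 + α) := by
    intro t
    induction t with
    | zero =>
      rw [hr0, hb]
      simp only [Pi.single_apply]
      rw [Finset.sum_eq_single s]
      · rw [if_pos rfl]
        have hc : Real.sqrt (d s) * (2 * α / (1 + α) * (1 / Real.sqrt (d s)))
            = 2 * α / (1 + α) := by
          field_simp
          exact div_self (hsqne s)
        rw [hc, abs_of_nonneg (div_nonneg (by linarith) (by linarith))]
      · intro v _ hv
        rw [if_neg hv]
        simp
      · intro h; exact absurd (Finset.mem_univ s) h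
    | succ t ih =>
      refine le_trans ?_ ih
      set rS : V → ℝ := fun u => if u ∈ S t then r t u else 0 with hrS
      have hr1 : ∀ v, r (t + 1) v =
          (r t v - rS v) + (1 - α) / (1 + α) * ∑ u, W v u * rS u := by
        intro v
        rw [hrupd t, hQ]
        simp only [Pi.sub_apply, Matrix.sub_mulVec, Matrix.one_mulVec,
          Matrix.smul_mulVec, Pi.smul_apply, smul_eq_mul,
          Matrix.mulVec, dotProduct]
        simp only [hrS]
        ring_nf
      have step1 : ∀ v, |Real.sqrt (d v) * r (t + 1) v| ≤
          Real.sqrt (d v) * |r t v - rS v| +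
            (1 - α) / (1 + α) * ∑ u, A v u / Real.sqrt (d u) * |rS u| := by
        intro v
        rw [hr1 v, mul_add]
        refine (abs_add_le _ _).trans (add_le_add ?_ ?_)
        · rw [abs_mul, abs_of_nonneg (Real.sqrt_nonneg _)]
        · have h2 : Real.sqrt (d v) * ((1 - α) / (1 + α) * ∑ u, W v u * rS u)
              = (1 - α) / (1 + α) * ∑ u, (A v u / Real.sqrt (d u)) * rS u := by
            rw [Finset.mul_sum, Finset.mul_sum, Finset.mul_sum]
            refine Finset.sum_congr rfl fun u _ => ?_
            have hx : Real.sqrt (d v) * (A v u / (Real.sqrt (d v) * Real.sqrt (d u)))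
                = A v u / Real.sqrt (d u) := by
              rw [mul_div_assoc', mul_div_mul_left _ _ (hsqne v)]
            rw [hW v u]
            linear_combination ((1 - α) / (1 + α) * rS u) * hx
          rw [h2, abs_mul, abs_of_nonneg hβ0]
          refine mul_le_mul_of_nonneg_left ?_ hβ0
          refine (Finset.abs_sum_le_sum_abs _ _).trans ?_
          refine Finset.sum_le_sum fun u _ => ?_
          rw [abs_mul]
          refine mul_le_mul_of_nonneg_right (le_of_eq ?_) (abs_nonneg _)
          rw [abs_div, abs_of_nonneg (Real.sqrt_nonneg _)]
          rcases h01 v u with h | h <;> rw [h] <;> simp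
      calc (∑ v, |Real.sqrt (d v) * r (t + 1) v|)
          ≤ ∑ v, (Real.sqrt (d v) * |r t v - rS v| +
              (1 - α) / (1 + α) * ∑ u, A v u / Real.sqrt (d u) * |rS u|) :=
            Finset.sum_le_sum fun v _ => step1 v
        _ = (∑ v, Real.sqrt (d v) * |r t v - rS v|) +
              (1 - α) / (1 + α) * ∑ u, Real.sqrt (d u) * |rS u| := by
            rw [Finset.sum_add_distrib]
            congr 1
            rw [← Finset.mul_sum, Finset.sum_comm]
            congr 1
            refine Finset.sum_congr rfl fun u _ => ?_
            have hcol : (∑ v, A v u) = d u := by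
              rw [hd u]
              exact Finset.sum_congr rfl fun v _ => hsym.apply u v ▸ rfl
            have hstep : (∑ v, A v u / Real.sqrt (d u) * |rS u|)
                = (∑ v, A v u) * (|rS u| / Real.sqrt (d u)) := by
              rw [Finset.sum_mul]
              exact Finset.sum_congr rfl fun v _ => by ring
            have hdu : Real.sqrt (d u) * Real.sqrt (d u) = d u :=
              Real.mul_self_sqrt (hdpos u).le
            rw [hstep, hcol, mul_div_assoc', div_eq_iff (hsqne u)]
            linear_combination (-|rS u|) * hdu
        _ = ∑ v, (Real.sqrt (d v) * |r t v - rS v| +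
              (1 - α) / (1 + α) * (Real.sqrt (d v) * |rS v|)) := by
            rw [Finset.sum_add_distrib, Finset.mul_sum]
        _ ≤ ∑ v, Real.sqrt (d v) * |r t v| := by
            refine Finset.sum_le_sum fun v _ => ?_
            by_cases hv : v ∈ S t
            · have h1 : rS v = r t v := by simp [hrS, hv]
              rw [h1, sub_self, abs_zero, mul_zero, zero_add]
              calc (1 - α) / (1 + α) * (Real.sqrt (d v) * |r t v|)
                  ≤ 1 * (Real.sqrt (d v) * |r t v|) :=
                    mul_le_mul_of_nonneg_right hβ1 (by positivity)
                _ = _ := one_mul _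
            · have h1 : rS v = 0 := by simp [hrS, hv]
              rw [h1, sub_zero, abs_zero, mul_zero, mul_zero, add_zero]
        _ = ∑ v, |Real.sqrt (d v) * r t v| := by
            refine Finset.sum_congr rfl fun v _ => ?_
            rw [abs_mul, abs_of_nonneg (Real.sqrt_nonneg _)]
  -- Part 1
  have part1 : ∀ t < T, ε * (∑ u ∈ S t, d u) ≤ γ t := by
    intro t ht
    have hden := hpos t ht
    rw [hγ t ht, le_div_iff₀ hden]
    have hnum : (2 * α * ε / (1 + α)) * (∑ u ∈ S t, d u) ≤
        ∑ v, |Real.sqrt (d v) * (if v ∈ S t then r t v else 0)| := by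
      rw [Finset.mul_sum]
      have hsub : (∑ u ∈ S t, |Real.sqrt (d u) * r t u|) ≤
          ∑ v, |Real.sqrt (d v) * (if v ∈ S t then r t v else 0)| := by
        have heq : (∑ u ∈ S t, |Real.sqrt (d u) * r t u|)
            = ∑ u ∈ S t, |Real.sqrt (d u) * (if u ∈ S t then r t u else 0)| :=
          Finset.sum_congr rfl fun u hu => by rw [if_pos hu]
        rw [heq]
        exact Finset.sum_le_sum_of_subset_of_nonneg (Finset.subset_univ _)
          fun v _ _ => abs_nonneg _
      refine le_trans ?_ hsub
      refine Finset.sum_le_sum fun u hu => ?_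
      exact (hactive t ht u hu).trans (le_abs_self _)
    calc ε * (∑ u ∈ S t, d u) * (∑ v, |Real.sqrt (d v) * r t v|)
        ≤ ε * (∑ u ∈ S t, d u) * (2 * α / (1 + α)) := by
          refine mul_le_mul_of_nonneg_left (key t) ?_
          exact mul_nonneg hε.le (Finset.sum_nonneg fun u _ => (hdpos u).le)
      _ = (2 * α * ε / (1 + α)) * (∑ u ∈ S t, d u) := by ring
      _ ≤ _ := hnum
  refine ⟨part1, ?_⟩
  -- Part 2
  have hTpos : (0:ℝ) < (T:ℝ) := by exact_mod_cast hT
  have hvnn : 0 ≤ volbar := by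
    rw [hvolbar]
    exact mul_nonneg (by positivity) (Finset.sum_nonneg fun t _ =>
      Finset.sum_nonneg fun u _ => (hdpos u).le)
  have hεv : ε * volbar ≤ γbar := by
    have hsum : ε * ∑ t ∈ Finset.range T, ∑ u ∈ S t, d u ≤ ∑ t ∈ Finset.range T, γ t := by
      rw [Finset.mul_sum]
      exact Finset.sum_le_sum fun t ht => part1 t (Finset.mem_range.mp ht)
    have h2 := mul_le_mul_of_nonneg_left hsum (show (0:ℝ) ≤ 1/(T:ℝ) by positivity)
    rw [hvolbar, hγbar]
    nlinarith [h2]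
  by_cases hg : 0 < γbar
  · rw [div_le_div_iff₀ hg hε, one_mul]
    nlinarith
  · push_neg at hg
    have hv0 : volbar = 0 := le_antisymm (by nlinarith) hvnn
    rw [hv0, zero_div]
    exact one_div_nonneg.mpr hε.le
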